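/- Let k > 4 and let σ1 ∈ S_k be given by σ1(i) = i+k−2 for i = 1, 2, σ1(i) = k+1−i for 3 ≤ i ≤ k−2, and σ1(i) = i−k+2 for i = k−1, k. Suppose σ ∈ S_k satisfies σ ≤ σ1 in the Bruhat order and D(σ) ∪ D(σ^{−1}) ⊆ {1, k−1, k}. Then σ is one of the following four permutations: (i) σ = σ1; (ii) σ(1) = 1 and σ(i) = k+2−i for 2 ≤ i ≤ k; (iii) σ(i) = k−i for 1 ≤ i ≤ k−1 and σ(k) = k; (iv) σ(1) = 1, σ(k) = k, and σ(i) = k+1−i for 2 ≤ i ≤ k−1. -/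

import Mathlib

/-! ## Segments and multisegments -/

structure Segment where
  a : ℤ
  b : ℤ
  nonempty : a ≤ b

namespace Segment

/-- `Δ ≺ Δ'`. -/
def prec (Δ Δ' : Segment) : Prop :=
  Δ.a < Δ'.a ∧ Δ'.a ≤ Δ.b + 1 ∧ Δ.b < Δ'.b

def linked (Δ Δ' : Segment) : Prop := prec Δ Δ' ∨ prec Δ' Δ

/-- `←Δ = [a-1, b-1]`. -/
def shiftl (Δ : Segment) : Segment :=
  ⟨Δ.a - 1, Δ.b - 1, by have := Δ.nonempty; omega⟩

end Segment

abbrev Multisegment := Multiset Segment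

/-- `Step m n` means `m ⊢ n`: `m` is obtained from `n` by replacing a pair of linked
segments of `n` by its offspring. -/
def Step (m n : Multisegment) : Prop :=
  ∃ (Δ Δ' : Segment) (r : Multisegment),
    Segment.prec Δ Δ' ∧ n = Δ ::ₘ Δ' ::ₘ r ∧
    ((Δ'.a ≤ Δ.b ∧ ∃ E F : Segment,
        E.a = Δ.a ∧ E.b = Δ'.b ∧ F.a = Δ'.a ∧ F.b = Δ.b ∧ m = E ::ₘ F ::ₘ r) ∨
     (Δ'.a = Δ.b + 1 ∧ ∃ E : Segment, E.a = Δ.a ∧ E.b = Δ'.b ∧ m = E ::ₘ r))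

/-- `Obt m n` means `m ⊨ n`: reflexive-transitive closure of `⊢`. -/
def Obt : Multisegment → Multisegment → Prop := Relation.ReflTransGen Step

def PairwiseUnlinked (m : Multisegment) : Prop :=
  ∀ (Δ Δ' : Segment) (r : Multisegment), m = Δ ::ₘ Δ' ::ₘ r → ¬ Segment.linked Δ Δ'

/-- `StepN l m n` : there is a chain of `l` steps `m = m_l ⊢ m_{l-1} ⊢ ⋯ ⊢ m_1 ⊢ n`. -/
def StepN : ℕ → Multisegment → Multisegment → Prop
  | 0, m, n => m = n
  | l + 1, m, n => ∃ p, Step m p ∧ StepN l p n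

/-- The complexity `c(m)`: the maximal `l` for which there is a chain of `l` steps ending at `m`. -/
noncomputable def complexity (m : Multisegment) : ℕ :=
  sSup {l : ℕ | ∃ m', StepN l m' m}

/-- Almost pairwise unlinked. -/
def APU (m : Multisegment) : Prop :=
  ∃ m', PairwiseUnlinked m' ∧ Step m' m

/-- The depth `d(m)`: the number of APU multisegments `n` with `n ⊨ m`. -/
noncomputable def depth (m : Multisegment) : ℕ :=
  {n : Multisegment | APU n ∧ Obt n m}.ncard

def Regular (m : Multisegment) : Prop :=
  (m.map Segment.a).Nodup ∧ (m.map Segment.b).Nodup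

def IsBalanced (m : Multisegment) : Prop :=
  Regular m ∧ depth m = complexity m

/-! ## Enumerated multisegments and the (GLS) condition -/

/-- The multisegment `Δ_0 + ⋯ + Δ_{k-1}` attached to an enumeration `Δ : ℕ → Segment`. -/
def msOf (k : ℕ) (Δ : ℕ → Segment) : Multisegment :=
  ↑((List.range k).map Δ)

def Xset (k : ℕ) (Δ : ℕ → Segment) : Set (ℕ × ℕ) :=
  {p | p.1 < k ∧ p.2 < k ∧ (Δ p.1).prec (Δ p.2)}

def Xtil (k : ℕ) (Δ : ℕ → Segment) : Set (ℕ × ℕ) :=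
  {p | p.1 < k ∧ p.2 < k ∧ ((Δ p.1).shiftl).prec (Δ p.2)}

open Classical in
/-- The vector `x_{i,j}(λ) ∈ ℂ^{X̃_m}` (viewed inside the functions `ℕ × ℕ → ℂ`). -/
noncomputable def glsVec (k : ℕ) (Δ : ℕ → Segment) (lam : ℕ → ℕ → ℂ) (i j : ℕ) :
    ℕ × ℕ → ℂ := fun p =>
  (if p.1 = i ∧ (p.2, j) ∈ Xset k Δ ∧ (i, p.2) ∈ Xtil k Δ then lam p.2 j else 0) -
  (if p.2 = j ∧ (p.1, j) ∈ Xtil k Δ ∧ (i, p.1) ∈ Xset k Δ then lam i p.1 else 0)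

/-- Condition (GLS). -/
def GLS (k : ℕ) (Δ : ℕ → Segment) : Prop :=
  ∃ lam : ℕ → ℕ → ℂ,
    LinearIndependent ℂ (fun p : Xset k Δ => glsVec k Δ lam p.1.1 p.1.2)

/-- The relation `⤳` between `X_m` and `X̃_m`. -/
def leadsTo (Δ : ℕ → Segment) (x y : ℕ × ℕ) : Prop :=
  (x.1 = y.1 ∧ (Δ y.2).prec (Δ x.2)) ∨ (x.2 = y.2 ∧ (Δ x.1).prec (Δ y.1))

/-- `N_{i,j} = {y ∈ X̃_m : (i,j) ⤳ y}`. -/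
def Nset (k : ℕ) (Δ : ℕ → Segment) (x : ℕ × ℕ) : Set (ℕ × ℕ) :=
  {y ∈ Xtil k Δ | leadsTo Δ x y}

/-- The labelled relation `x ⤳^r y`. -/
def LabRel (k : ℕ) (Δ : ℕ → Segment) (x r y : ℕ × ℕ) : Prop :=
  (x.1 = y.1 ∧ r = (y.2, x.2) ∧ x ∈ Xset k Δ ∧ r ∈ Xset k Δ ∧ y ∈ Xtil k Δ) ∨
  (x.2 = y.2 ∧ r = (x.1, y.1) ∧ x ∈ Xset k Δ ∧ r ∈ Xset k Δ ∧ y ∈ Xtil k Δ)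

/-- Multisegments of type 4231. -/
def Type4231 (m : Multisegment) : Prop :=
  ∃ (k : ℕ) (Δ : ℕ → Segment), 4 ≤ k ∧ m = msOf k Δ ∧ Regular m ∧
    (∀ i j, i < j → j < k → (Δ j).b < (Δ i).b) ∧
    (∀ i, 2 ≤ i → i + 1 < k → (Δ (i + 1)).prec (Δ i)) ∧
    (Δ 2).prec (Δ 0) ∧
    (Δ (k - 1)).a < (Δ 1).a ∧ (Δ 1).a < (Δ (k - 2)).a

/-- Multisegments of type 3412. -/
def Type3412 (m : Multisegment) : Prop :=
  ∃ (k : ℕ) (Δ : ℕ → Segment), 4 ≤ k ∧ m = msOf k Δ ∧ Regular m ∧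
    (∀ i j, i < j → j < k → (Δ j).b < (Δ i).b) ∧
    (∀ i, 3 ≤ i → i + 1 < k → (Δ (i + 1)).prec (Δ i)) ∧
    (Δ 3).prec (Δ 1) ∧
    (Δ 2).a < (Δ (k - 1)).a ∧ (Δ (k - 1)).a < (Δ 0).a ∧
    (Δ 0).a < (Δ (if k = 4 then 1 else k - 2)).a

/-- `Δ_i` is a detachable segment of `Δ_0 + ⋯ + Δ_{k-1}`. -/
def Detachable (k : ℕ) (Δ : ℕ → Segment) (i : ℕ) : Prop :=
  (∀ j, j < k → j ≠ i → ¬ (Δ i).prec (Δ j) ∧ ¬ ((Δ i).shiftl).prec (Δ j)) ∨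
  (∀ j, j < k → j ≠ i → ¬ (Δ j).prec (Δ i) ∧ ¬ ((Δ j).shiftl).prec (Δ i))

/-! ## Permutations, Bruhat order, smooth pairs -/

/-- The rank function `r_σ(i,j)` (0-based). -/
def rankFn {k : ℕ} (σ : Equiv.Perm (Fin k)) (i j : Fin k) : ℕ :=
  (Finset.univ.filter fun u : Fin k => u ≤ i ∧ σ u ≤ j).card

/-- The Bruhat order, via the rank-function characterization. -/
def BruhatLE {k : ℕ} (τ σ : Equiv.Perm (Fin k)) : Prop :=
  ∀ i j : Fin k, rankFn σ i j ≤ rankFn τ i j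

/-- The length `ℓ(σ)`. -/
def lenPerm {k : ℕ} (σ : Equiv.Perm (Fin k)) : ℕ :=
  (Finset.univ.filter fun p : Fin k × Fin k => p.1 < p.2 ∧ σ p.2 < σ p.1).card

def IsTransposition {k : ℕ} (t : Equiv.Perm (Fin k)) : Prop :=
  ∃ i j : Fin k, i ≠ j ∧ t = Equiv.swap i j

/-- `(σ, σ0)` is a smooth pair. -/
def SmoothPair {k : ℕ} (σ0 σ : Equiv.Perm (Fin k)) : Prop :=
  BruhatLE σ0 σ ∧
    {t : Equiv.Perm (Fin k) | IsTransposition t ∧ BruhatLE (σ0 * t) σ}.ncard = lenPerm σ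

/-- The ascent set `D(σ)` of a permutation, in 1-based indexing. -/
def Dset {k : ℕ} (σ : Equiv.Perm (Fin k)) : Set ℕ :=
  {i | ∃ (h1 : 1 ≤ i) (h2 : i < k), (σ ⟨i - 1, by omega⟩ : ℕ) < (σ ⟨i, h2⟩ : ℕ)} ∪ {k}

/-- The flattened permutation `rmv_i(σ)`. -/
def rmv {k : ℕ} (σ : Equiv.Perm (Fin (k + 1))) (i : Fin (k + 1)) : Equiv.Perm (Fin k) :=
  ((finSuccAboveEquiv i).trans
    (σ.subtypeEquiv fun x => not_congr (EmbeddingLike.apply_eq_iff_eq σ).symm)).trans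
    (finSuccAboveEquiv (σ i)).symm

/-! ## Bi-sequences -/

structure BiSeq (k : ℕ) where
  a : Fin k → ℤ
  b : Fin k → ℤ
  mono_a : Monotone a
  anti_b : Antitone b
  compat : ∀ i : Fin k, a i.rev ≤ b i + 1

def RegularBS {k : ℕ} (A : BiSeq k) : Prop := StrictMono A.a ∧ StrictAnti A.b

/-- `σ` satisfies the defining recursion of `σ0(A)`. -/
def Sigma0Spec {k : ℕ} (A : BiSeq k) (σ : Equiv.Perm (Fin k)) : Prop :=
  ∀ i : Fin k,
    A.a (σ.symm i) ≤ A.b i + 1 ∧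
    ∀ j : Fin k, A.a j ≤ A.b i + 1 → (∀ i' : Fin k, i < i' → σ.symm i' ≠ j) →
      j ≤ σ.symm i

def Avoids213 {k : ℕ} (σ : Equiv.Perm (Fin k)) : Prop :=
  ¬ ∃ i j l : Fin k, i < j ∧ j < l ∧ σ j < σ i ∧ σ i < σ l

/-- The multisegment `m_σ(A)`, consisting of the nonempty intervals among
`[a_{σ⁻¹(i)}, b_i]`. -/
def mOf {k : ℕ} (A : BiSeq k) (σ : Equiv.Perm (Fin k)) : Multisegment :=
  ((Finset.univ.filter fun i : Fin k => A.a (σ.symm i) ≤ A.b i).attach.val).map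
    fun i => { a := A.a (σ.symm i.1), b := A.b i.1,
               nonempty := by have := Finset.mem_filter.mp i.2; exact this.2 }

/-! ## Permutation matrices -/

def PermMat {k : ℕ} (σ : Equiv.Perm (Fin k)) : Matrix (Fin k) (Fin k) ℕ :=
  fun i j => if σ i = j then 1 else 0

/-- The equivalence relation generated by `i ∼ j` whenever `M_{i,l} = M_{j,l} = 1` for some `l`. -/
def matRel {k : ℕ} (M : Matrix (Fin k) (Fin k) ℕ) : Fin k → Fin k → Prop :=
  Relation.EqvGen (fun i j => ∃ l, M i l = 1 ∧ M j l = 1)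

theorem statement14 (k : ℕ) (hk : 4 < k) (σ1 σ : Equiv.Perm (Fin k))
    (hσ1 : ∀ i : Fin k, (σ1 i : ℕ) + 1 =
      if (i : ℕ) + 1 ≤ 2 then (i : ℕ) + 1 + k - 2
      else if (i : ℕ) + 1 ≤ k - 2 then k + 1 - ((i : ℕ) + 1)
      else (i : ℕ) + 1 + 2 - k)
    (hle : BruhatLE σ σ1)
    (hD : Dset σ ∪ Dset σ⁻¹ ⊆ ({1, k - 1, k} : Set ℕ)) :
    σ = σ1 ∨
    (∀ i : Fin k, (σ i : ℕ) + 1 =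
      if (i : ℕ) + 1 = 1 then 1 else k + 2 - ((i : ℕ) + 1)) ∨
    (∀ i : Fin k, (σ i : ℕ) + 1 =
      if (i : ℕ) + 1 = k then k else k - ((i : ℕ) + 1)) ∨
    (∀ i : Fin k, (σ i : ℕ) + 1 =
      if (i : ℕ) + 1 = 1 then 1
      else if (i : ℕ) + 1 = k then k
      else k + 1 - ((i : ℕ) + 1)) := by
  have hk5 : 5 ≤ k := hk
  obtain ⟨g, hgdef⟩ : ∃ g : ℕ → ℕ, ∀ (i : ℕ) (h : i < k), ((σ ⟨i, h⟩ : Fin k) : ℕ) = g i :=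
    ⟨fun i => if h : i < k then ((σ ⟨i, h⟩ : Fin k) : ℕ) else 0, fun i h => by beta_reduce; rw [dif_pos h]⟩
  obtain ⟨gi, hgidef⟩ : ∃ gi : ℕ → ℕ, ∀ (v : ℕ) (h : v < k), ((σ⁻¹ ⟨v, h⟩ : Fin k) : ℕ) = gi v :=
    ⟨fun v => if h : v < k then ((σ⁻¹ ⟨v, h⟩ : Fin k) : ℕ) else 0, fun v h => by beta_reduce; rw [dif_pos h]⟩
  have gval : ∀ i, i < k → g i < k := fun i h => by rw [← hgdef i h]; exact (σ ⟨i, h⟩).2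
  have gival : ∀ v, v < k → gi v < k := fun v h => by rw [← hgidef v h]; exact (σ⁻¹ ⟨v, h⟩).2
  have ginj : ∀ i j, i < k → j < k → g i = g j → i = j := by
    intro i j hi hj he
    have h2 : σ ⟨i, hi⟩ = σ ⟨j, hj⟩ := Fin.ext (by rw [hgdef i hi, hgdef j hj, he])
    have h3 := σ.injective h2
    exact congrArg Fin.val h3
  have gne : ∀ i j, i < k → j < k → i ≠ j → g i ≠ g j := fun i j hi hj hij he =>
    hij (ginj i j hi hj he)
  have gig : ∀ i (h : i < k), gi (g i) = i := by
    intro i h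
    have h2 : g i < k := gval i h
    rw [← hgidef (g i) h2]
    have h3 : (⟨g i, h2⟩ : Fin k) = σ ⟨i, h⟩ := Fin.ext (hgdef i h).symm
    rw [h3, Equiv.Perm.inv_def, Equiv.symm_apply_apply]
  have ggi : ∀ v (h : v < k), g (gi v) = v := by
    intro v h
    have h2 : gi v < k := gival v h
    rw [← hgdef (gi v) h2]
    have h3 : (⟨gi v, h2⟩ : Fin k) = σ⁻¹ ⟨v, h⟩ := Fin.ext (hgidef v h).symm
    rw [h3, Equiv.Perm.inv_def, Equiv.apply_symm_apply]
  have hdec : ∀ i, 1 ≤ i → i + 1 ≤ k - 2 → g (i + 1) < g i := by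
    intro i h1 h2
    have hlt0 : i < k := by omega
    have hlt1 : i + 1 < k := by omega
    have hne : g i ≠ g (i + 1) := fun he => by have := ginj i (i+1) hlt0 hlt1 he; omega
    by_contra hcon
    push_neg at hcon
    have hmem : (i + 1) ∈ Dset σ := by
      have hp : (σ ⟨i, hlt0⟩ : ℕ) < (σ ⟨i + 1, hlt1⟩ : ℕ) := by
        rw [hgdef i hlt0, hgdef (i+1) hlt1]; omega
      exact Set.mem_union_left _ ⟨by omega, hlt1, hp⟩
    have := hD (Set.mem_union_left _ hmem)
    simp only [Set.mem_insert_iff, Set.mem_singleton_iff] at this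
    omega
  have hdecInv : ∀ v, 1 ≤ v → v + 1 ≤ k - 2 → gi (v + 1) < gi v := by
    intro v h1 h2
    have hlt0 : v < k := by omega
    have hlt1 : v + 1 < k := by omega
    have hne : gi v ≠ gi (v + 1) := fun he => by
      have e1 := ggi v hlt0; have e2 := ggi (v+1) hlt1; rw [he] at e1; omega
    by_contra hcon
    push_neg at hcon
    have hmem : (v + 1) ∈ Dset σ⁻¹ := by
      have hp : (σ⁻¹ ⟨v, hlt0⟩ : ℕ) < (σ⁻¹ ⟨v + 1, hlt1⟩ : ℕ) := by
        rw [hgidef v hlt0, hgidef (v+1) hlt1]; omega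
      exact Set.mem_union_left _ ⟨by omega, hlt1, hp⟩
    have := hD (Set.mem_union_right _ hmem)
    simp only [Set.mem_insert_iff, Set.mem_singleton_iff] at this
    omega
  have hchain : ∀ j i, 1 ≤ i → i ≤ j → j ≤ k - 2 → g j + j ≤ g i + i := by
    intro j
    induction j with
    | zero => intro i h1 h2 h3; omega
    | succ n ih =>
      intro i h1 h2 h3
      rcases Nat.eq_or_lt_of_le h2 with he | hlt
      · rw [he]
      · have h4 := ih i h1 (by omega) (by omega)
        have h5 := hdec n (by omega) (by omega)
        omega
  have hinterval : ∀ l r hi : ℕ, 1 ≤ l → l ≤ r → r ≤ k - 2 →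
      g l ≤ hi → hi + l ≤ g r + r → ∀ i, l ≤ i → i ≤ r → g i + i = hi + l := by
    intro l r hi h1 h2 h3 h4 h5 i hi1 hi2
    have c1 := hchain i l h1 hi1 (by omega)
    have c2 := hchain r i (by omega) hi2 h3
    omega
  have h0k : (0:ℕ) < k := by omega
  have hk2 : k - 2 < k := by omega
  have hk1 : k - 1 < k := by omega
  have e0 : (σ1 ⟨0, h0k⟩ : ℕ) = k - 2 := by
    have h : (σ1 ⟨0, h0k⟩ : ℕ) + 1 =
        if 0 + 1 ≤ 2 then 0 + 1 + k - 2 else if 0 + 1 ≤ k - 2 then k + 1 - (0 + 1)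
        else 0 + 1 + 2 - k := hσ1 ⟨0, h0k⟩
    rw [if_pos (by omega)] at h
    omega
  have e2 : (σ1 ⟨k - 2, hk2⟩ : ℕ) = 0 := by
    have h : (σ1 ⟨k - 2, hk2⟩ : ℕ) + 1 =
        if (k - 2) + 1 ≤ 2 then (k - 2) + 1 + k - 2
        else if (k - 2) + 1 ≤ k - 2 then k + 1 - ((k - 2) + 1)
        else (k - 2) + 1 + 2 - k := hσ1 ⟨k - 2, hk2⟩
    rw [if_neg (by omega), if_neg (by omega)] at h
    omega
  have hB1 : g 0 ≠ k - 1 := by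
    intro hcon
    have hr := hle ⟨0, h0k⟩ ⟨k - 2, hk2⟩
    have h1 : 1 ≤ rankFn σ1 ⟨0, h0k⟩ ⟨k - 2, hk2⟩ := by
      simp only [rankFn]
      apply Finset.card_pos.mpr
      refine ⟨⟨0, h0k⟩, Finset.mem_filter.mpr ⟨Finset.mem_univ _, le_refl _, ?_⟩⟩
      rw [Fin.le_def]
      exact le_of_eq e0
    have h2 : rankFn σ ⟨0, h0k⟩ ⟨k - 2, hk2⟩ = 0 := by
      simp only [rankFn]
      rw [Finset.card_eq_zero, Finset.filter_eq_empty_iff]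
      intro u _
      rintro ⟨hu1, hu2⟩
      rw [Fin.le_def] at hu1 hu2
      have hu0 : (u : ℕ) = 0 := by
        have h3 : (u : ℕ) ≤ 0 := hu1
        omega
      have h4 : u = ⟨0, h0k⟩ := Fin.ext hu0
      rw [h4] at hu2
      have h5 : (σ ⟨0, h0k⟩ : ℕ) ≤ k - 2 := hu2
      rw [hgdef 0 h0k] at h5
      omega
    omega
  have hB2 : g (k - 1) ≠ 0 := by
    intro hcon
    have hr := hle ⟨k - 2, hk2⟩ ⟨0, h0k⟩
    have h1 : 1 ≤ rankFn σ1 ⟨k - 2, hk2⟩ ⟨0, h0k⟩ := by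
      simp only [rankFn]
      apply Finset.card_pos.mpr
      refine ⟨⟨k - 2, hk2⟩, Finset.mem_filter.mpr ⟨Finset.mem_univ _, le_refl _, ?_⟩⟩
      rw [Fin.le_def]
      exact le_of_eq e2
    have h2 : rankFn σ ⟨k - 2, hk2⟩ ⟨0, h0k⟩ = 0 := by
      simp only [rankFn]
      rw [Finset.card_eq_zero, Finset.filter_eq_empty_iff]
      intro u _
      rintro ⟨hu1, hu2⟩
      rw [Fin.le_def] at hu1 hu2
      have h3 : (σ u : ℕ) ≤ 0 := hu2
      have h4 : (σ ⟨k - 1, hk1⟩ : ℕ) = 0 := by rw [hgdef (k-1) hk1]; exact hcon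
      have h5 : u = ⟨k - 1, hk1⟩ := σ.injective (Fin.ext (by omega))
      have h6 : (u : ℕ) ≤ k - 2 := hu1
      rw [h5] at h6
      have h7 : k - 1 ≤ k - 2 := h6
      omega
    omega
  have ha : g 0 = 0 ∨ g 0 = k - 2 := by
    have hv := gval 0 (by omega)
    by_contra hcon
    push_neg at hcon
    have h2 := hdecInv (g 0) (by omega) (by omega)
    have h3 : gi (g 0) = 0 := gig 0 (by omega)
    omega
  have hd : g (k - 1) = 1 ∨ g (k - 1) = k - 1 := by
    have hv := gval (k - 1) (by omega)
    by_contra hcon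
    push_neg at hcon
    have h2 := hdecInv (g (k - 1) - 1) (by omega) (by omega)
    rw [show g (k - 1) - 1 + 1 = g (k - 1) from by omega] at h2
    have h3 : gi (g (k - 1)) = k - 1 := gig (k - 1) (by omega)
    have h4 := gival (g (k - 1) - 1) (by omega)
    omega
  rcases ha with ha0 | ha2 <;> rcases hd with hd1 | hdk
  · -- case (ii): g 0 = 0, g (k-1) = 1
    refine Or.inr (Or.inl ?_)
    have hmid : ∀ i, 1 ≤ i → i ≤ k - 2 → g i + i = k := by
      intro i hi1 hi2
      have hub : g 1 ≤ k - 1 := by have := gval 1 (by omega); omega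
      have hlb : (k - 1) + 1 ≤ g (k - 2) + (k - 2) := by
        have h1 := gne (k-2) 0 (by omega) (by omega) (by omega)
        have h2 := gne (k-2) (k-1) (by omega) (by omega) (by omega)
        omega
      have := hinterval 1 (k-2) (k-1) (by omega) (by omega) (by omega) hub hlb i hi1 hi2
      omega
    intro i
    have h0g : (σ i : ℕ) = g (i : ℕ) := hgdef i.1 i.2
    have hik : (i : ℕ) < k := i.2
    rw [h0g]
    by_cases c1 : (i : ℕ) + 1 = 1
    · rw [if_pos c1]
      rw [show (i : ℕ) = 0 from by omega]
      omega
    · rw [if_neg c1]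
      by_cases c2 : (i : ℕ) = k - 1
      · rw [c2]; omega
      · have := hmid (i : ℕ) (by omega) (by omega); omega
  · -- case (iv): g 0 = 0, g (k-1) = k-1
    refine Or.inr (Or.inr (Or.inr ?_))
    have hmid : ∀ i, 1 ≤ i → i ≤ k - 2 → g i + i = k - 1 := by
      intro i hi1 hi2
      have hub : g 1 ≤ k - 2 := by
        have h1 := gne 1 (k-1) (by omega) (by omega) (by omega)
        have := gval 1 (by omega)
        omega
      have hlb : (k - 2) + 1 ≤ g (k - 2) + (k - 2) := by
        have h1 := gne (k-2) 0 (by omega) (by omega) (by omega)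
        omega
      have := hinterval 1 (k-2) (k-2) (by omega) (by omega) (by omega) hub hlb i hi1 hi2
      omega
    intro i
    have h0g : (σ i : ℕ) = g (i : ℕ) := hgdef i.1 i.2
    have hik : (i : ℕ) < k := i.2
    rw [h0g]
    by_cases c1 : (i : ℕ) + 1 = 1
    · rw [if_pos c1]
      rw [show (i : ℕ) = 0 from by omega]
      omega
    · rw [if_neg c1]
      by_cases c2 : (i : ℕ) + 1 = k
      · rw [if_pos c2]
        rw [show (i : ℕ) = k - 1 from by omega]
        omega
      · rw [if_neg c2]
        have := hmid (i : ℕ) (by omega) (by omega); omega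
  · -- case (i): g 0 = k-2, g (k-1) = 1 : σ = σ1
    have hp1 : g 1 = k - 1 := by
      have hpk : gi (k - 1) < k := gival (k - 1) (by omega)
      have hgp : g (gi (k - 1)) = k - 1 := ggi (k - 1) (by omega)
      have h0 : gi (k - 1) ≠ 0 := fun h => by rw [h] at hgp; omega
      have hk1' : gi (k - 1) ≠ k - 1 := fun h => by rw [h] at hgp; omega
      by_cases hp : gi (k - 1) = 1
      · rw [hp] at hgp; exact hgp
      · exfalso
        have hc := hchain (gi (k - 1)) 1 (by omega) (by omega) (by omega)
        have := gval 1 (by omega)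
        omega
    have hq1 : g (k - 2) = 0 := by
      have hqk : gi 0 < k := gival 0 (by omega)
      have hgq : g (gi 0) = 0 := ggi 0 (by omega)
      have h0 : gi 0 ≠ 0 := fun h => by rw [h] at hgq; omega
      have hk1' : gi 0 ≠ k - 1 := fun h => by rw [h] at hgq; omega
      by_cases hq : gi 0 = k - 2
      · rw [hq] at hgq; exact hgq
      · exfalso
        have hc := hchain (k - 2) (gi 0) (by omega) (by omega) (by omega)
        omega
    have hmid2 : ∀ i, 2 ≤ i → i ≤ k - 3 → g i + i = k - 1 := by
      intro i hi1 hi2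
      have hub : g 2 ≤ k - 3 := by
        have h1 := gne 2 1 (by omega) (by omega) (by omega)
        have h2 := gne 2 0 (by omega) (by omega) (by omega)
        have := gval 2 (by omega)
        omega
      have hlb : (k - 3) + 2 ≤ g (k - 3) + (k - 3) := by
        have h1 := gne (k-3) (k-2) (by omega) (by omega) (by omega)
        have h2 := gne (k-3) (k-1) (by omega) (by omega) (by omega)
        omega
      have := hinterval 2 (k-3) (k-3) (by omega) (by omega) (by omega) hub hlb i hi1 hi2
      omega
    refine Or.inl (Equiv.ext fun i => Fin.ext ?_)
    have h0g : (σ i : ℕ) = g (i : ℕ) := hgdef i.1 i.2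
    have h1 := hσ1 i
    have hik : (i : ℕ) < k := i.2
    rw [h0g]
    by_cases c1 : (i : ℕ) + 1 ≤ 2
    · rw [if_pos c1] at h1
      rcases (show (i : ℕ) = 0 ∨ (i : ℕ) = 1 from by omega) with e | e <;>
        rw [e] at h1 ⊢ <;> omega
    · rw [if_neg c1] at h1
      by_cases c2 : (i : ℕ) + 1 ≤ k - 2
      · rw [if_pos c2] at h1
        have := hmid2 (i : ℕ) (by omega) (by omega)
        omega
      · rw [if_neg c2] at h1
        rcases (show (i : ℕ) = k - 2 ∨ (i : ℕ) = k - 1 from by omega) with e | e <;>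
          rw [e] at h1 ⊢ <;> omega
  · -- case (iii): g 0 = k-2, g (k-1) = k-1
    refine Or.inr (Or.inr (Or.inl ?_))
    have hmid : ∀ i, 1 ≤ i → i ≤ k - 2 → g i + i = k - 2 := by
      intro i hi1 hi2
      have hub : g 1 ≤ k - 3 := by
        have h1 := gne 1 0 (by omega) (by omega) (by omega)
        have h2 := gne 1 (k-1) (by omega) (by omega) (by omega)
        have := gval 1 (by omega)
        omega
      have hlb : (k - 3) + 1 ≤ g (k - 2) + (k - 2) := by omega
      have := hinterval 1 (k-2) (k-3) (by omega) (by omega) (by omega) hub hlb i hi1 hi2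
      omega
    intro i
    have h0g : (σ i : ℕ) = g (i : ℕ) := hgdef i.1 i.2
    have hik : (i : ℕ) < k := i.2
    rw [h0g]
    by_cases c1 : (i : ℕ) + 1 = k
    · rw [if_pos c1]
      rw [show (i : ℕ) = k - 1 from by omega]
      omega
    · rw [if_neg c1]
      by_cases c2 : (i : ℕ) = 0
      · rw [c2]; omega
      · have := hmid (i : ℕ) (by omega) (by omega); omega
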